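/- arXiv:2502.07569 — 2 statements merged into one kernel-verified Lean document; each statement's English description precedes it below -/
import Mathlib

section
/- Let N ∈ ℕ, let M be a Hermitian positive definite N×N complex matrix, let H be a Hermitian N×N complex matrix, set A = M⁻¹·H, and let t ∈ ℝ. Then exp(−i·t·A)* · M · exp(−i·t·A) = M; in particular, for every U ∈ ℂᴺ the M-weighted norm is conserved: (exp(−i·t·A)·U)* · M · (exp(−i·t·A)·U) = U* · M · U. -/
open Matrix
open scoped ComplexOrder

/-- Mass conservation of the linear substep of the time-splitting scheme SI:
for a Hermitian positive definite mass matrix `M` and a Hermitian matrix `H`,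
the propagator `exp(−i·t·M⁻¹H)` is unitary with respect to the `M`-inner
product: `exp(−i·t·A)* · M · exp(−i·t·A) = M` where `A = M⁻¹H`, and hence the
`M`-weighted norm of every coefficient vector is conserved. -/
theorem ts_scheme_SI_mass_conservation
    (N : ℕ) (M H : Matrix (Fin N) (Fin N) ℂ)
    (hM : M.PosDef) (hH : H.IsHermitian) (t : ℝ)
    (A : Matrix (Fin N) (Fin N) ℂ) (hA : A = M⁻¹ * H) :
    (NormedSpace.exp ((-(Complex.I * (t : ℂ))) • A))ᴴ * M *
        NormedSpace.exp ((-(Complex.I * (t : ℂ))) • A) = M ∧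
    ∀ U : Fin N → ℂ,
      star ((NormedSpace.exp ((-(Complex.I * (t : ℂ))) • A)).mulVec U) ⬝ᵥ
          M.mulVec ((NormedSpace.exp ((-(Complex.I * (t : ℂ))) • A)).mulVec U) =
        star U ⬝ᵥ M.mulVec U := by
  set X : Matrix (Fin N) (Fin N) ℂ := (-(Complex.I * (t : ℂ))) • A with hX
  have hMunit : IsUnit M := hM.isUnit
  have hMH : M.IsHermitian := hM.isHermitian
  -- Xᴴ = M * (-X) * M⁻¹
  have hXH : Xᴴ = M * (-X) * M⁻¹ := by
    rw [hX, hA, conjTranspose_smul, conjTranspose_mul, conjTranspose_nonsing_inv,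
      hMH.eq, hH.eq]
    rw [show star (-(Complex.I * (t : ℂ))) = Complex.I * (t : ℂ) by
      simp]
    rw [← neg_smul (M := Matrix (Fin N) (Fin N) ℂ), neg_neg, Matrix.mul_smul, Matrix.smul_mul]
    congr 1
    rw [← Matrix.mul_assoc, Matrix.mul_nonsing_inv _ ((Matrix.isUnit_iff_isUnit_det M).mp hMunit),
      Matrix.one_mul]
  have hE : (NormedSpace.exp X)ᴴ = M * NormedSpace.exp (-X) * M⁻¹ := by
    rw [← Matrix.exp_conjTranspose, hXH, Matrix.exp_conj M (-X) hMunit]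
  have hinv : NormedSpace.exp (-X) * NormedSpace.exp X = 1 := by
    rw [← Matrix.exp_add_of_commute (-X) X (Commute.neg_left (Commute.refl X)),
      neg_add_cancel, NormedSpace.exp_zero]
  have key : (NormedSpace.exp X)ᴴ * M * NormedSpace.exp X = M := by
    rw [hE, Matrix.mul_assoc (M * NormedSpace.exp (-X)) M⁻¹,
      Matrix.mul_assoc M (NormedSpace.exp (-X))]
    rw [Matrix.nonsing_inv_mul _ ((Matrix.isUnit_iff_isUnit_det M).mp hMunit),
      Matrix.mul_one, Matrix.mul_assoc, hinv, Matrix.mul_one]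
  refine ⟨key, fun U => ?_⟩
  calc star ((NormedSpace.exp X).mulVec U) ⬝ᵥ M.mulVec ((NormedSpace.exp X).mulVec U)
      = star U ⬝ᵥ ((NormedSpace.exp X)ᴴ * M * NormedSpace.exp X).mulVec U := by
        rw [star_mulVec, Matrix.mulVec_mulVec, dotProduct_mulVec, Matrix.vecMul_vecMul,
          ← Matrix.mul_assoc, ← dotProduct_mulVec]
    _ = star U ⬝ᵥ M.mulVec U := by rw [key]
end

section
/- For every r > 0 there exists a constant C > 0 such that: for every unital complex Banach algebra A, all a, b ∈ A with ‖a‖ ≤ r and ‖b‖ ≤ r, and all t ∈ [0, 1], one has ‖exp(t·(a + b)) − exp((t/2)·b) · exp(t·a) · exp((t/2)·b)‖ ≤ C·t³. -/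
set_option linter.unusedSectionVars false
set_option maxHeartbeats 1000000

section StrangAux

variable {A : Type} [NormedRing A] [NormedAlgebra ℂ A] [CompleteSpace A] [NormOneClass A]

lemma strangAux_term_norm (x : A) (n : ℕ) :
    ‖((Nat.factorial n : ℂ)⁻¹ • x ^ n)‖ ≤ ‖x‖ ^ n / (Nat.factorial n : ℝ) := by
  rw [norm_smul, norm_inv, Complex.norm_natCast, div_eq_inv_mul]
  exact mul_le_mul_of_nonneg_left (norm_pow_le x n) (by positivity)

lemma strangAux_real_exp_tsum (c : ℝ) :
    ∑' n : ℕ, c ^ n / (Nat.factorial n : ℝ) = Real.exp c := by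
  rw [Real.exp_eq_exp_ℝ, NormedSpace.exp_eq_tsum_div]

lemma strangAux_exp_norm_le (x : A) : ‖NormedSpace.exp x‖ ≤ Real.exp ‖x‖ := by
  rw [NormedSpace.exp_eq_tsum ℂ, ← strangAux_real_exp_tsum ‖x‖]
  refine (norm_tsum_le_tsum_norm (NormedSpace.norm_expSeries_summable' x)).trans ?_
  exact Summable.tsum_le_tsum (fun n => strangAux_term_norm x n)
    (NormedSpace.norm_expSeries_summable' x) (Real.summable_pow_div_factorial _)

lemma strangAux_exp_remainder (x : A) :
    ‖NormedSpace.exp x - (1 + x + (2:ℂ)⁻¹ • (x * x))‖ ≤ ‖x‖ ^ 3 * Real.exp ‖x‖ := by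
  have hs : Summable fun n : ℕ => ((Nat.factorial n : ℂ)⁻¹ • x ^ n : A) :=
    NormedSpace.expSeries_summable' x
  have hsplit := Summable.sum_add_tsum_nat_add 3 hs
  have hsum : ∑ i ∈ Finset.range 3, ((Nat.factorial i : ℂ)⁻¹ • x ^ i : A)
      = 1 + x + (2:ℂ)⁻¹ • (x * x) := by
    simp [Finset.sum_range_succ, Nat.factorial, pow_succ]
  have hrem : NormedSpace.exp x - (1 + x + (2:ℂ)⁻¹ • (x * x))
      = ∑' n : ℕ, ((Nat.factorial (n + 3) : ℂ)⁻¹ • x ^ (n + 3) : A) := by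
    rw [NormedSpace.exp_eq_tsum ℂ]
    beta_reduce
    rw [← hsplit, hsum]
    abel
  rw [hrem]
  have hnorm : Summable fun n : ℕ => ‖((Nat.factorial (n + 3) : ℂ)⁻¹ • x ^ (n + 3) : A)‖ :=
    (summable_nat_add_iff 3).mpr (NormedSpace.norm_expSeries_summable' x)
  refine (norm_tsum_le_tsum_norm hnorm).trans ?_
  have hterm : ∀ n : ℕ, ‖((Nat.factorial (n + 3) : ℂ)⁻¹ • x ^ (n + 3) : A)‖
      ≤ ‖x‖ ^ 3 * (‖x‖ ^ n / (Nat.factorial n : ℝ)) := by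
    intro n
    refine (strangAux_term_norm x (n + 3)).trans ?_
    rw [pow_add, mul_comm (‖x‖ ^ n), mul_div_assoc]
    gcongr
    omega
  calc ∑' n : ℕ, ‖((Nat.factorial (n + 3) : ℂ)⁻¹ • x ^ (n + 3) : A)‖
      ≤ ∑' n : ℕ, ‖x‖ ^ 3 * (‖x‖ ^ n / (Nat.factorial n : ℝ)) :=
        Summable.tsum_le_tsum hterm hnorm ((Real.summable_pow_div_factorial _).mul_left _)
    _ = ‖x‖ ^ 3 * Real.exp ‖x‖ := by rw [tsum_mul_left, strangAux_real_exp_tsum]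

lemma strangAux_poly (s : ℂ) (a b : A) :
    (1 + (s/2)•b + (2:ℂ)⁻¹ • (((s/2)•b)*((s/2)•b))) *
      (1 + s•a + (2:ℂ)⁻¹ • ((s•a)*(s•a))) *
      (1 + (s/2)•b + (2:ℂ)⁻¹ • (((s/2)•b)*((s/2)•b))) -
      (1 + s•(a+b) + (2:ℂ)⁻¹ • ((s•(a+b))*(s•(a+b)))) =
    s^3 • ((8:ℂ)⁻¹•(a*(b*b)) + (4:ℂ)⁻¹•(a*(a*b)) + (8:ℂ)⁻¹•(b*(b*b)) + (4:ℂ)⁻¹•(b*(a*b))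
        + (4:ℂ)⁻¹•(b*(a*a)) + (8:ℂ)⁻¹•(b*(b*a)))
    + s^4 • ((16:ℂ)⁻¹•(a*(a*(b*b))) + (16:ℂ)⁻¹•(b*(a*(b*b))) + (8:ℂ)⁻¹•(b*(a*(a*b)))
        + (64:ℂ)⁻¹•(b*(b*(b*b))) + (16:ℂ)⁻¹•(b*(b*(a*b))) + (16:ℂ)⁻¹•(b*(b*(a*a))))
    + s^5 • ((32:ℂ)⁻¹•(b*(a*(a*(b*b)))) + (32:ℂ)⁻¹•(b*(b*(a*(a*b))))
        + (64:ℂ)⁻¹•(b*(b*(a*(b*b)))))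
    + s^6 • ((128:ℂ)⁻¹•(b*(b*(a*(a*(b*b)))))) := by
  simp only [mul_add, add_mul, mul_smul_comm, smul_mul_assoc, smul_smul, smul_add,
    mul_one, one_mul, mul_assoc]
  module

end StrangAux

/-- Third-order local (one-step) error bound for Strang splitting in a unital
complex Banach algebra: for every `r > 0` there is `C > 0` such that for all
`a, b` with `‖a‖ ≤ r`, `‖b‖ ≤ r` and all `t ∈ [0, 1]`,
`‖exp(t(a+b)) − exp((t/2)b)·exp(ta)·exp((t/2)b)‖ ≤ C·t³`. -/
theorem strang_splitting_local_error (r : ℝ) (hr : 0 < r) :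
    ∃ C : ℝ, 0 < C ∧
      ∀ (A : Type) (_ : NormedRing A) (_ : NormedAlgebra ℂ A) (_ : CompleteSpace A)
        (_ : NormOneClass A) (a b : A), ‖a‖ ≤ r → ‖b‖ ≤ r →
        ∀ t : ℝ, t ∈ Set.Icc (0 : ℝ) 1 →
          ‖NormedSpace.exp (((t : ℂ)) • (a + b)) -
              NormedSpace.exp ((((t : ℝ) / 2 : ℝ) : ℂ) • b) *
                NormedSpace.exp (((t : ℂ)) • a) *
                NormedSpace.exp ((((t : ℝ) / 2 : ℝ) : ℂ) • b)‖ ≤ C * t ^ 3 := by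
  set K : ℝ := Real.exp (2*r) + (1 + r + r^2) with hKdef
  set R : ℝ := (max 1 r)^6 with hRdef
  have hρ1 : (1:ℝ) ≤ max 1 r := le_max_left _ _
  have hKpos : 0 < K := by positivity
  have hRpos : 0 < R := by positivity
  refine ⟨8*r^3*K + 3*(r^3*K^3) + 24*R + 1, by positivity, ?_⟩
  intro A _ _ _ _ a b ha hb t ht
  obtain ⟨ht0, ht1⟩ := ht
  have hcast : (((t/2 : ℝ)) : ℂ) = (t:ℂ)/2 := by push_cast; ring
  rw [hcast]
  have hpoly := strangAux_poly (A := A) (t:ℂ) a b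
  set s : ℂ := (t:ℂ) with hsdef
  have hsn : ‖s‖ = t := by
    rw [hsdef, Complex.norm_real, Real.norm_eq_abs, abs_of_nonneg ht0]
  set u : A := (s/2) • b with hudef
  set v : A := s • a with hvdef
  set x : A := s • (a+b) with hxdef
  set Qu : A := 1 + u + (2:ℂ)⁻¹ • (u*u) with hQudef
  set Qv : A := 1 + v + (2:ℂ)⁻¹ • (v*v) with hQvdef
  set Qx : A := 1 + x + (2:ℂ)⁻¹ • (x*x) with hQxdef
  -- basic norm bounds
  have hun : ‖u‖ ≤ r * t := by
    rw [hudef, norm_smul, norm_div, hsn]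
    have h2 : ‖(2:ℂ)‖ = 2 := by norm_num
    rw [h2]
    nlinarith [norm_nonneg b]
  have hvn : ‖v‖ ≤ r * t := by
    rw [hvdef, norm_smul, hsn]
    nlinarith [norm_nonneg a]
  have hxn : ‖x‖ ≤ 2 * r * t := by
    rw [hxdef, norm_smul, hsn]
    have := norm_add_le a b
    nlinarith [norm_nonneg (a+b)]
  have hrt : r * t ≤ r := by nlinarith
  have hrtnn : (0:ℝ) ≤ r * t := by positivity
  -- exp and Q bounds
  have hexpK : ∀ y : A, ‖y‖ ≤ 2*r → ‖NormedSpace.exp y‖ ≤ K := by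
    intro y hy
    refine (strangAux_exp_norm_le y).trans ?_
    refine (Real.exp_le_exp.mpr hy).trans ?_
    rw [hKdef]; nlinarith [sq_nonneg r]
  have hexpnK : ∀ c : ℝ, c ≤ 2*r → Real.exp c ≤ K := by
    intro c hc
    refine (Real.exp_le_exp.mpr hc).trans ?_
    rw [hKdef]; nlinarith [sq_nonneg r]
  have hQbound : ∀ y : A, ‖y‖ ≤ r → ‖(1:A) + y + (2:ℂ)⁻¹ • (y*y)‖ ≤ K := by
    intro y hy
    have h0 : ‖(2:ℂ)⁻¹ • (y*y)‖ ≤ ‖y‖*‖y‖ := by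
      rw [norm_smul]
      have h2c : ‖(2:ℂ)⁻¹‖ = 2⁻¹ := by norm_num
      rw [h2c]
      nlinarith [norm_mul_le y y, norm_nonneg (y*y), norm_nonneg y]
    calc ‖(1:A) + y + (2:ℂ)⁻¹ • (y*y)‖ ≤ ‖(1:A) + y‖ + ‖(2:ℂ)⁻¹ • (y*y)‖ := norm_add_le _ _
      _ ≤ (‖(1:A)‖ + ‖y‖) + ‖y‖*‖y‖ := add_le_add (norm_add_le _ _) h0
      _ = 1 + ‖y‖ + ‖y‖*‖y‖ := by rw [norm_one]
      _ ≤ 1 + r + r^2 := by nlinarith [norm_nonneg y]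
      _ ≤ K := by rw [hKdef]; nlinarith [Real.exp_pos (2*r)]
  have hEu : ‖NormedSpace.exp u‖ ≤ K := hexpK u (by nlinarith)
  have hEv : ‖NormedSpace.exp v‖ ≤ K := hexpK v (by nlinarith)
  have hQu : ‖Qu‖ ≤ K := by rw [hQudef]; exact hQbound u (by nlinarith)
  have hQv : ‖Qv‖ ≤ K := by rw [hQvdef]; exact hQbound v (by nlinarith)
  -- remainder bounds
  have hremG : ∀ (y : A) (c : ℝ), ‖y‖ ≤ c → c ≤ 2*r →
      ‖NormedSpace.exp y - (1 + y + (2:ℂ)⁻¹ • (y*y))‖ ≤ c^3 * K := by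
    intro y c hy hc
    refine (strangAux_exp_remainder y).trans ?_
    have h1 : Real.exp ‖y‖ ≤ K := hexpnK _ (hy.trans hc)
    have hc0 : 0 ≤ c := (norm_nonneg y).trans hy
    exact mul_le_mul (pow_le_pow_left₀ (norm_nonneg y) hy 3) h1 (Real.exp_pos _).le (pow_nonneg hc0 3)
  have hRu : ‖NormedSpace.exp u - Qu‖ ≤ (r*t)^3 * K := by
    rw [hQudef]; exact hremG u (r*t) hun (by nlinarith)
  have hRv : ‖NormedSpace.exp v - Qv‖ ≤ (r*t)^3 * K := by
    rw [hQvdef]; exact hremG v (r*t) hvn (by nlinarith)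
  have hRx : ‖NormedSpace.exp x - Qx‖ ≤ (2*r*t)^3 * K := by
    rw [hQxdef]; exact hremG x (2*r*t) hxn (by nlinarith)
  -- product norm helper
  have hmul : ∀ (y z : A) (p q : ℝ), ‖y‖ ≤ p → ‖z‖ ≤ q → ‖y*z‖ ≤ p*q := by
    intro y z p q hy hz
    exact (norm_mul_le y z).trans
      (mul_le_mul hy hz (norm_nonneg z) ((norm_nonneg y).trans hy))
  -- monomial bounds
  set ρ : ℝ := max 1 r with hρdef
  have haρ : ‖a‖ ≤ ρ := ha.trans (le_max_right _ _)
  have hbρ : ‖b‖ ≤ ρ := hb.trans (le_max_right _ _)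
  have hρle : ∀ k : ℕ, k ≤ 6 → ρ^k ≤ R := by
    intro k hk
    rw [hRdef]
    exact pow_le_pow_right₀ hρ1 hk
  have hsmulR : ∀ (c : ℂ) (m : A), ‖c‖ ≤ 1 → ‖m‖ ≤ R → ‖c • m‖ ≤ R := by
    intro c m hc hm
    rw [norm_smul]
    calc ‖c‖ * ‖m‖ ≤ 1 * R := mul_le_mul hc hm (norm_nonneg m) zero_le_one
      _ = R := one_mul R
  have hm3 : ∀ m : A, ‖m‖ ≤ ρ*(ρ*ρ) → ‖m‖ ≤ R := by
    intro m hm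
    refine hm.trans ?_
    calc ρ*(ρ*ρ) = ρ^3 := by ring
      _ ≤ R := hρle 3 (by norm_num)
  have hm4 : ∀ m : A, ‖m‖ ≤ ρ*(ρ*(ρ*ρ)) → ‖m‖ ≤ R := by
    intro m hm
    refine hm.trans ?_
    calc ρ*(ρ*(ρ*ρ)) = ρ^4 := by ring
      _ ≤ R := hρle 4 (by norm_num)
  have hm5 : ∀ m : A, ‖m‖ ≤ ρ*(ρ*(ρ*(ρ*ρ))) → ‖m‖ ≤ R := by
    intro m hm
    refine hm.trans ?_
    calc ρ*(ρ*(ρ*(ρ*ρ))) = ρ^5 := by ring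
      _ ≤ R := hρle 5 (by norm_num)
  have hm6 : ∀ m : A, ‖m‖ ≤ ρ*(ρ*(ρ*(ρ*(ρ*ρ)))) → ‖m‖ ≤ R := by
    intro m hm
    refine hm.trans ?_
    calc ρ*(ρ*(ρ*(ρ*(ρ*ρ)))) = ρ^6 := by ring
      _ ≤ R := hρle 6 (by norm_num)
  -- bounds on the Z pieces
  have hZ3 : ‖(8:ℂ)⁻¹•(a*(b*b)) + (4:ℂ)⁻¹•(a*(a*b)) + (8:ℂ)⁻¹•(b*(b*b)) + (4:ℂ)⁻¹•(b*(a*b))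
      + (4:ℂ)⁻¹•(b*(a*a)) + (8:ℂ)⁻¹•(b*(b*a))‖ ≤ 6*R := by
    have t1 : ‖(8:ℂ)⁻¹•(a*(b*b))‖ ≤ R :=
      hsmulR _ _ (by norm_num) (hm3 _ (hmul _ _ _ _ haρ (hmul _ _ _ _ hbρ hbρ)))
    have t2 : ‖(4:ℂ)⁻¹•(a*(a*b))‖ ≤ R :=
      hsmulR _ _ (by norm_num) (hm3 _ (hmul _ _ _ _ haρ (hmul _ _ _ _ haρ hbρ)))
    have t3 : ‖(8:ℂ)⁻¹•(b*(b*b))‖ ≤ R :=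
      hsmulR _ _ (by norm_num) (hm3 _ (hmul _ _ _ _ hbρ (hmul _ _ _ _ hbρ hbρ)))
    have t4 : ‖(4:ℂ)⁻¹•(b*(a*b))‖ ≤ R :=
      hsmulR _ _ (by norm_num) (hm3 _ (hmul _ _ _ _ hbρ (hmul _ _ _ _ haρ hbρ)))
    have t5 : ‖(4:ℂ)⁻¹•(b*(a*a))‖ ≤ R :=
      hsmulR _ _ (by norm_num) (hm3 _ (hmul _ _ _ _ hbρ (hmul _ _ _ _ haρ haρ)))
    have t6 : ‖(8:ℂ)⁻¹•(b*(b*a))‖ ≤ R :=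
      hsmulR _ _ (by norm_num) (hm3 _ (hmul _ _ _ _ hbρ (hmul _ _ _ _ hbρ haρ)))
    refine le_trans (norm_add_le _ _) ?_
    refine le_trans (add_le_add (norm_add_le _ _) le_rfl) ?_
    refine le_trans (add_le_add (add_le_add (norm_add_le _ _) le_rfl) le_rfl) ?_
    refine le_trans (add_le_add (add_le_add (add_le_add (norm_add_le _ _) le_rfl) le_rfl) le_rfl) ?_
    refine le_trans (add_le_add (add_le_add (add_le_add (add_le_add (norm_add_le _ _) le_rfl) le_rfl) le_rfl) le_rfl) ?_
    linarith
  have hZ4 : ‖(16:ℂ)⁻¹•(a*(a*(b*b))) + (16:ℂ)⁻¹•(b*(a*(b*b))) + (8:ℂ)⁻¹•(b*(a*(a*b)))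
      + (64:ℂ)⁻¹•(b*(b*(b*b))) + (16:ℂ)⁻¹•(b*(b*(a*b))) + (16:ℂ)⁻¹•(b*(b*(a*a)))‖ ≤ 6*R := by
    have t1 : ‖(16:ℂ)⁻¹•(a*(a*(b*b)))‖ ≤ R :=
      hsmulR _ _ (by norm_num) (hm4 _ (hmul _ _ _ _ haρ (hmul _ _ _ _ haρ (hmul _ _ _ _ hbρ hbρ))))
    have t2 : ‖(16:ℂ)⁻¹•(b*(a*(b*b)))‖ ≤ R :=
      hsmulR _ _ (by norm_num) (hm4 _ (hmul _ _ _ _ hbρ (hmul _ _ _ _ haρ (hmul _ _ _ _ hbρ hbρ))))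
    have t3 : ‖(8:ℂ)⁻¹•(b*(a*(a*b)))‖ ≤ R :=
      hsmulR _ _ (by norm_num) (hm4 _ (hmul _ _ _ _ hbρ (hmul _ _ _ _ haρ (hmul _ _ _ _ haρ hbρ))))
    have t4 : ‖(64:ℂ)⁻¹•(b*(b*(b*b)))‖ ≤ R :=
      hsmulR _ _ (by norm_num) (hm4 _ (hmul _ _ _ _ hbρ (hmul _ _ _ _ hbρ (hmul _ _ _ _ hbρ hbρ))))
    have t5 : ‖(16:ℂ)⁻¹•(b*(b*(a*b)))‖ ≤ R :=
      hsmulR _ _ (by norm_num) (hm4 _ (hmul _ _ _ _ hbρ (hmul _ _ _ _ hbρ (hmul _ _ _ _ haρ hbρ))))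
    have t6 : ‖(16:ℂ)⁻¹•(b*(b*(a*a)))‖ ≤ R :=
      hsmulR _ _ (by norm_num) (hm4 _ (hmul _ _ _ _ hbρ (hmul _ _ _ _ hbρ (hmul _ _ _ _ haρ haρ))))
    refine le_trans (norm_add_le _ _) ?_
    refine le_trans (add_le_add (norm_add_le _ _) le_rfl) ?_
    refine le_trans (add_le_add (add_le_add (norm_add_le _ _) le_rfl) le_rfl) ?_
    refine le_trans (add_le_add (add_le_add (add_le_add (norm_add_le _ _) le_rfl) le_rfl) le_rfl) ?_
    refine le_trans (add_le_add (add_le_add (add_le_add (add_le_add (norm_add_le _ _) le_rfl) le_rfl) le_rfl) le_rfl) ?_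
    linarith
  have hZ5 : ‖(32:ℂ)⁻¹•(b*(a*(a*(b*b)))) + (32:ℂ)⁻¹•(b*(b*(a*(a*b))))
      + (64:ℂ)⁻¹•(b*(b*(a*(b*b))))‖ ≤ 3*R := by
    have t1 : ‖(32:ℂ)⁻¹•(b*(a*(a*(b*b))))‖ ≤ R :=
      hsmulR _ _ (by norm_num) (hm5 _ (hmul _ _ _ _ hbρ (hmul _ _ _ _ haρ (hmul _ _ _ _ haρ (hmul _ _ _ _ hbρ hbρ)))))
    have t2 : ‖(32:ℂ)⁻¹•(b*(b*(a*(a*b))))‖ ≤ R :=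
      hsmulR _ _ (by norm_num) (hm5 _ (hmul _ _ _ _ hbρ (hmul _ _ _ _ hbρ (hmul _ _ _ _ haρ (hmul _ _ _ _ haρ hbρ)))))
    have t3 : ‖(64:ℂ)⁻¹•(b*(b*(a*(b*b))))‖ ≤ R :=
      hsmulR _ _ (by norm_num) (hm5 _ (hmul _ _ _ _ hbρ (hmul _ _ _ _ hbρ (hmul _ _ _ _ haρ (hmul _ _ _ _ hbρ hbρ)))))
    refine le_trans (norm_add_le _ _) ?_
    refine le_trans (add_le_add (norm_add_le _ _) le_rfl) ?_
    linarith
  have hZ6 : ‖(128:ℂ)⁻¹•(b*(b*(a*(a*(b*b)))))‖ ≤ R :=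
    hsmulR _ _ (by norm_num) (hm6 _ (hmul _ _ _ _ hbρ (hmul _ _ _ _ hbρ (hmul _ _ _ _ haρ (hmul _ _ _ _ haρ (hmul _ _ _ _ hbρ hbρ))))))
  -- bound on the polynomial part
  have ht3 : ∀ k : ℕ, 3 ≤ k → t^k ≤ t^3 := fun k hk => pow_le_pow_of_le_one ht0 ht1 hk
  have ht3nn : (0:ℝ) ≤ t^3 := by positivity
  have hA3 : ‖Qu * Qv * Qu - Qx‖ ≤ 24 * R * t^3 := by
    rw [hQudef, hQvdef, hQxdef, hudef, hvdef, hxdef, hpoly]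
    have e3 : ‖(s^3) • ((8:ℂ)⁻¹•(a*(b*b)) + (4:ℂ)⁻¹•(a*(a*b)) + (8:ℂ)⁻¹•(b*(b*b)) + (4:ℂ)⁻¹•(b*(a*b))
        + (4:ℂ)⁻¹•(b*(a*a)) + (8:ℂ)⁻¹•(b*(b*a)))‖ ≤ t^3 * (6*R) := by
      rw [norm_smul, norm_pow, hsn]
      exact mul_le_mul (ht3 3 le_rfl) hZ3 (norm_nonneg _) ht3nn
    have e4 : ‖(s^4) • ((16:ℂ)⁻¹•(a*(a*(b*b))) + (16:ℂ)⁻¹•(b*(a*(b*b))) + (8:ℂ)⁻¹•(b*(a*(a*b)))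
        + (64:ℂ)⁻¹•(b*(b*(b*b))) + (16:ℂ)⁻¹•(b*(b*(a*b))) + (16:ℂ)⁻¹•(b*(b*(a*a))))‖ ≤ t^3 * (6*R) := by
      rw [norm_smul, norm_pow, hsn]
      exact mul_le_mul (ht3 4 (by norm_num)) hZ4 (norm_nonneg _) ht3nn
    have e5 : ‖(s^5) • ((32:ℂ)⁻¹•(b*(a*(a*(b*b)))) + (32:ℂ)⁻¹•(b*(b*(a*(a*b))))
        + (64:ℂ)⁻¹•(b*(b*(a*(b*b)))))‖ ≤ t^3 * (3*R) := by
      rw [norm_smul, norm_pow, hsn]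
      exact mul_le_mul (ht3 5 (by norm_num)) hZ5 (norm_nonneg _) ht3nn
    have e6 : ‖(s^6) • ((128:ℂ)⁻¹•(b*(b*(a*(a*(b*b))))))‖ ≤ t^3 * R := by
      rw [norm_smul, norm_pow, hsn]
      exact mul_le_mul (ht3 6 (by norm_num)) hZ6 (norm_nonneg _) ht3nn
    refine le_trans (norm_add_le _ _) ?_
    refine le_trans (add_le_add (norm_add_le _ _) le_rfl) ?_
    refine le_trans (add_le_add (add_le_add (norm_add_le _ _) le_rfl) le_rfl) ?_
    nlinarith [e3, e4, e5, e6]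
  -- decomposition
  have hdecomp : NormedSpace.exp x
        - NormedSpace.exp u * NormedSpace.exp v * NormedSpace.exp u
      = (NormedSpace.exp x - Qx)
        - ((NormedSpace.exp u - Qu) * (NormedSpace.exp v * NormedSpace.exp u)
          + Qu * ((NormedSpace.exp v - Qv) * NormedSpace.exp u)
          + (Qu * Qv) * (NormedSpace.exp u - Qu))
        - (Qu * Qv * Qu - Qx) := by noncomm_ring
  rw [hdecomp]
  have s1 : ‖(NormedSpace.exp u - Qu) * (NormedSpace.exp v * NormedSpace.exp u)‖
      ≤ ((r*t)^3*K)*(K*K) := hmul _ _ _ _ hRu (hmul _ _ _ _ hEv hEu)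
  have s2 : ‖Qu * ((NormedSpace.exp v - Qv) * NormedSpace.exp u)‖
      ≤ K*(((r*t)^3*K)*K) := hmul _ _ _ _ hQu (hmul _ _ _ _ hRv hEu)
  have s3 : ‖(Qu * Qv) * (NormedSpace.exp u - Qu)‖
      ≤ (K*K)*((r*t)^3*K) := hmul _ _ _ _ (hmul _ _ _ _ hQu hQv) hRu
  have hmid : ‖(NormedSpace.exp u - Qu) * (NormedSpace.exp v * NormedSpace.exp u)
      + Qu * ((NormedSpace.exp v - Qv) * NormedSpace.exp u)
      + (Qu * Qv) * (NormedSpace.exp u - Qu)‖ ≤ 3*(r^3*K^3)*t^3 := by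
    refine le_trans (norm_add₃_le) ?_
    have e1 : ((r*t)^3*K)*(K*K) = (r^3*K^3)*t^3 := by ring
    have e2 : K*(((r*t)^3*K)*K) = (r^3*K^3)*t^3 := by ring
    have e3 : (K*K)*((r*t)^3*K) = (r^3*K^3)*t^3 := by ring
    linarith [s1, s2, s3, e1.le, e2.le, e3.le]
  refine le_trans (norm_sub_le _ _) ?_
  refine le_trans (add_le_add (norm_sub_le _ _) le_rfl) ?_
  have hRx' : ‖NormedSpace.exp x - Qx‖ ≤ 8*r^3*K*t^3 := by
    refine hRx.trans ?_
    have : (2*r*t)^3*K = 8*r^3*K*t^3 := by ring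
    exact this.le
  nlinarith [hRx', hmid, hA3, ht3nn, hRpos, hKpos]
end
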